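/- In dimension d = 1 with λ : [0,z] → (0,∞) continuous, let c > -min_{y∈[0,z]} λ(y) and define A(x;c) = ∫_0^x log(1 + c/λ(y)) dy and W̄(t,x) = 2A(z;c) - 2A(x;c) - 2c(T-t) for (t,x) ∈ [0,T]×[0,z]. Then W̄ is a classical subsolution of the Isaacs equation: W̄_t(t,x) - 2H(x, -DW̄(t,x)/2) = 0 for all (t,x) ∈ [0,T)×[0,z), and W̄(T,z) = 0 ≤ 0, where H(x,α) = λ(x)(e^α - 1). -/

import Mathlib

theorem stmt7 (z T : ℝ) (hz0 : 0 < z) (hz1 : z < 1) (hT : 0 < T)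
    (lam : ℝ → ℝ) (hcont : ContinuousOn lam (Set.Icc 0 z))
    (hpos : ∀ y ∈ Set.Icc 0 z, 0 < lam y)
    (m : ℝ) (hm : IsLeast (lam '' Set.Icc 0 z) m)
    (c : ℝ) (hc : -m < c)
    (A : ℝ → ℝ) (hA : ∀ x, A x = ∫ y in (0:ℝ)..x, Real.log (1 + c / lam y))
    (W : ℝ → ℝ → ℝ)
    (hW : ∀ t x, W t x = 2 * A z - 2 * A x - 2 * c * (T - t)) :
    (∀ t ∈ Set.Ico 0 T, ∀ x ∈ Set.Ico 0 z,
      HasDerivAt (fun s => W s x) (2 * c) t ∧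
      HasDerivWithinAt (fun y => W t y) (-2 * Real.log (1 + c / lam x)) (Set.Icc 0 z) x ∧
      2 * c - 2 * (lam x * (Real.exp (-(-2 * Real.log (1 + c / lam x)) / 2) - 1)) = 0) ∧
    W T z = 0 := by
  set f : ℝ → ℝ := fun y => Real.log (1 + c / lam y) with hf
  have harg : ∀ y ∈ Set.Icc 0 z, 0 < 1 + c / lam y := by
    intro y hy
    have hl := hpos y hy
    have hmle : m ≤ lam y := hm.2 ⟨y, hy, rfl⟩
    have : 0 < lam y + c := by linarith
    have : 0 < (lam y + c) / lam y := div_pos this hl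
    calc (0:ℝ) < (lam y + c) / lam y := this
      _ = 1 + c / lam y := by field_simp
  have hfc : ContinuousOn f (Set.Icc 0 z) := by
    apply ContinuousOn.log
    · exact continuousOn_const.add (continuousOn_const.div hcont
        (fun y hy => (hpos y hy).ne'))
    · exact fun y hy => (harg y hy).ne'
  constructor
  · intro t ht x hx
    have hxI : x ∈ Set.Icc 0 z := ⟨hx.1, hx.2.le⟩
    refine ⟨?_, ?_, ?_⟩
    · have : HasDerivAt (fun s : ℝ => 2 * A z - 2 * A x - 2 * c * (T - s)) (2 * c) t := by
        have h1 : HasDerivAt (fun s : ℝ => T - s) (-1) t :=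
          (hasDerivAt_id t).const_sub T
        have h2 := (h1.const_mul (2 * c)).const_sub (2 * A z - 2 * A x)
        exact h2.congr_deriv (by ring)
      exact this.congr_of_eventuallyEq (Filter.Eventually.of_forall fun s => hW s x)
    · haveI : Fact (x ∈ Set.Icc 0 z) := ⟨hxI⟩
      have hint : IntervalIntegrable f MeasureTheory.volume 0 x :=
        (hfc.mono (by
          rw [Set.uIcc_of_le hx.1]
          exact Set.Icc_subset_Icc le_rfl hx.2.le)).intervalIntegrable
      have hmeas : StronglyMeasurableAtFilter f (nhdsWithin x (Set.Icc 0 z)) :=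
        hfc.stronglyMeasurableAtFilter_nhdsWithin measurableSet_Icc x
      have hcw : ContinuousWithinAt f (Set.Icc 0 z) x := hfc x hxI
      have hF : HasDerivWithinAt (fun u => ∫ y in (0:ℝ)..u, f y) (f x) (Set.Icc 0 z) x :=
        intervalIntegral.integral_hasDerivWithinAt_right hint hmeas hcw
      have hG : HasDerivWithinAt
          (fun y => 2 * A z - 2 * c * (T - t) - 2 * (∫ s in (0:ℝ)..y, f s))
          (-2 * f x) (Set.Icc 0 z) x := by
        have := ((hF.const_mul 2).const_sub (2 * A z - 2 * c * (T - t)))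
        exact this.congr_deriv (by ring)
      refine hG.congr (fun y _ => ?_) ?_
      · simp only [hW, hA]; ring
      · simp only [hW, hA]; ring
    · have hx1 : 0 < 1 + c / lam x := harg x hxI
      have : Real.exp (-(-2 * Real.log (1 + c / lam x)) / 2) = 1 + c / lam x := by
        rw [show (-(-2 * Real.log (1 + c / lam x)) / 2) = Real.log (1 + c / lam x) by ring,
          Real.exp_log hx1]
      rw [this]
      have hl := hpos x hxI
      field_simp
      ring
  · rw [hW]; ring
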